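/- Let a, λ ∈ (−∞, 1) with λ < a, and let c ∈ (0, 1]. Then ∫₀¹ t^{−a} (c + t)^{λ−1} dt ≤ c^{λ−a} (1−λ) / ((1−a)(a−λ)). -/

import Mathlib

open intervalIntegral Real

theorem kernel_estimate_subcritical (a lam c : ℝ) (ha : a < 1) (hlam : lam < 1)
    (hla : lam < a) (hc0 : 0 < c) (hc1 : c ≤ 1) :
    ∫ t in (0:ℝ)..1, t ^ (-a) * (c + t) ^ (lam - 1) ≤
      c ^ (lam - a) * (1 - lam) / ((1 - a) * (a - lam)) := by
  have hna : (-1:ℝ) < -a := by linarith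
  have hpow : IntervalIntegrable (fun t : ℝ => t ^ (-a)) MeasureTheory.volume 0 c :=
    intervalIntegrable_rpow' hna
  have hcont1 : ContinuousOn (fun t : ℝ => (c + t) ^ (lam - 1)) (Set.uIcc 0 c) := by
    apply ContinuousOn.rpow_const
    · exact (continuous_const.add continuous_id).continuousOn
    · intro x hx
      rw [Set.uIcc_of_le hc0.le] at hx
      left; intro h; linarith [hx.1]
  have hint1 : IntervalIntegrable (fun t : ℝ => t ^ (-a) * (c + t) ^ (lam - 1))
      MeasureTheory.volume 0 c := hpow.mul_continuousOn hcont1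
  have hint2 : IntervalIntegrable (fun t : ℝ => t ^ (-a) * (c + t) ^ (lam - 1))
      MeasureTheory.volume c 1 := by
    apply ContinuousOn.intervalIntegrable
    rw [Set.uIcc_of_le hc1]
    apply ContinuousOn.mul
    · apply ContinuousOn.rpow_const continuousOn_id
      intro x hx; left
      exact ne_of_gt (lt_of_lt_of_le hc0 hx.1)
    · apply ContinuousOn.rpow_const ((continuous_const.add continuous_id).continuousOn)
      intro x hx; left; intro h; simp only [Pi.add_apply, id_eq] at h; linarith [hx.1]
  rw [← intervalIntegral.integral_add_adjacent_intervals hint1 hint2]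
  have hb1 : (∫ t in (0:ℝ)..c, t ^ (-a) * (c + t) ^ (lam - 1)) ≤
      ∫ t in (0:ℝ)..c, t ^ (-a) * c ^ (lam - 1) := by
    apply intervalIntegral.integral_mono_on hc0.le hint1 (hpow.mul_const _)
    intro x hx
    exact mul_le_mul_of_nonneg_left
      (Real.rpow_le_rpow_of_nonpos hc0 (by linarith [hx.1]) (by linarith))
      (Real.rpow_nonneg hx.1 _)
  have hb2 : (∫ t in c..1, t ^ (-a) * (c + t) ^ (lam - 1)) ≤
      ∫ t in c..1, t ^ (lam - a - 1) := by
    apply intervalIntegral.integral_mono_on hc1 hint2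
    · apply ContinuousOn.intervalIntegrable
      apply ContinuousOn.rpow_const continuousOn_id
      intro x hx
      rw [Set.uIcc_of_le hc1] at hx
      left; exact ne_of_gt (lt_of_lt_of_le hc0 hx.1)
    · intro x hx
      have hx0 : 0 < x := lt_of_lt_of_le hc0 hx.1
      calc x ^ (-a) * (c + x) ^ (lam - 1) ≤ x ^ (-a) * x ^ (lam - 1) :=
            mul_le_mul_of_nonneg_left
              (Real.rpow_le_rpow_of_nonpos hx0 (by linarith) (by linarith))
              (Real.rpow_nonneg hx0.le _)
        _ = x ^ (lam - a - 1) := by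
            rw [← Real.rpow_add hx0, show -a + (lam - 1) = lam - a - 1 by ring]
  have hI1 : (∫ t in (0:ℝ)..c, t ^ (-a) * c ^ (lam - 1)) = c ^ (lam - a) / (1 - a) := by
    rw [intervalIntegral.integral_mul_const, integral_rpow (Or.inl hna)]
    rw [Real.zero_rpow (by intro h; linarith : -a + 1 ≠ 0), sub_zero,
      div_mul_eq_mul_div, ← Real.rpow_add hc0,
      show -a + 1 + (lam - 1) = lam - a by ring]
    ring_nf
  have hI2 : (∫ t in c..1, t ^ (lam - a - 1)) ≤ c ^ (lam - a) / (a - lam) := by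
    have h1 : (0:ℝ) < a - lam := by linarith
    rw [integral_rpow (Or.inr ⟨by intro h; apply absurd h; intro h'; linarith,
      by rw [Set.uIcc_of_le hc1]; rintro ⟨h, -⟩; linarith⟩)]
    rw [show lam - a - 1 + 1 = lam - a by ring, Real.one_rpow]
    have heq : (1 - c ^ (lam - a)) / (lam - a) = (c ^ (lam - a) - 1) / (a - lam) := by
      rw [div_eq_div_iff (by linarith) (by linarith)]; ring
    rw [heq, div_le_div_iff₀ h1 h1]
    nlinarith [Real.rpow_pos_of_pos hc0 (lam - a)]
  have h1a : (1:ℝ) - a ≠ 0 := by intro h; linarith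
  have h2a : a - lam ≠ 0 := by intro h; linarith
  have key : c ^ (lam - a) / (1 - a) + c ^ (lam - a) / (a - lam) =
      c ^ (lam - a) * (1 - lam) / ((1 - a) * (a - lam)) := by
    field_simp
    ring
  linarith [hb1, hb2, hI1, hI2, key]
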